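/- If every finite independent union-closed family of finite sets, other than ∅ and {∅}, has an element of its universe belonging to at least half of its sets, then every finite union-closed family of finite sets, other than ∅ and {∅}, has an element of its universe belonging to at least half of its sets. -/

import Mathlib

/-- The universe `U(𝓕)` of a finite family of finite sets: the union of its members. -/
def famUniv (F : Finset (Finset ℕ)) : Finset ℕ := F.sup id

/-- `𝓕_a = {F ∈ 𝓕 : a ∈ F}`. -/
def famAt (F : Finset (Finset ℕ)) (a : ℕ) : Finset (Finset ℕ) := F.filter (fun X => a ∈ X)

/-- `𝓕` is union-closed. -/
def unionClosed (F : Finset (Finset ℕ)) : Prop := ∀ A ∈ F, ∀ B ∈ F, A ∪ B ∈ F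

/-- `𝓕` is independent: for every `a ∈ U(𝓕)` and every `S ⊆ U(𝓕) \ {a}`, either some
member of `𝓕` avoiding `a` meets `S`, or some member of `𝓕` containing `a` misses `S`. -/
def independent (F : Finset (Finset ℕ)) : Prop :=
  ∀ a ∈ famUniv F, ∀ S ⊆ famUniv F \ {a},
    (∃ O ∈ F, a ∉ O ∧ (O ∩ S).Nonempty) ∨ (∃ O ∈ F, a ∈ O ∧ O ∩ S = ∅)

lemma stmt3_aux
    (h : ∀ F : Finset (Finset ℕ), unionClosed F → independent F → F ≠ ∅ → F ≠ {∅} →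
      ∃ a ∈ famUniv F, F.card ≤ 2 * (famAt F a).card) :
    ∀ n : ℕ, ∀ F : Finset (Finset ℕ), (famUniv F).card ≤ n → unionClosed F → F ≠ ∅ → F ≠ {∅} →
      ∃ a ∈ famUniv F, F.card ≤ 2 * (famAt F a).card := by
  intro n
  induction n with
  | zero =>
    intro F hcard huc hne hne'
    exfalso
    apply hne'
    have hU : famUniv F = ∅ := Finset.card_eq_zero.mp (Nat.le_zero.mp hcard)
    have hall : ∀ X ∈ F, X = ∅ := by
      intro X hX
      have : X ⊆ famUniv F := Finset.le_sup (f := id) hX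
      rw [hU] at this
      exact Finset.subset_empty.mp this
    obtain ⟨X, hX⟩ := Finset.nonempty_iff_ne_empty.mpr hne
    apply Finset.eq_singleton_iff_unique_mem.mpr
    exact ⟨hall X hX ▸ hX, fun Y hY => hall Y hY⟩
  | succ n IH =>
    intro F hcard huc hne hne'
    by_cases hind : independent F
    · exact h F huc hind hne hne'
    unfold independent at hind
    push_neg at hind
    obtain ⟨a, ha, S, hS, hneg, hpos⟩ := hind
    -- hneg : ∀ O ∈ F, a ∉ O → ¬(O ∩ S).Nonempty (or = ∅)
    -- hpos : ∀ O ∈ F, a ∈ O → O ∩ S ≠ ∅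
    have haS : a ∉ S := by
      intro hmem
      have := hS hmem
      simp at this
    -- intersection with S unaffected by erasing a
    have hinterS : ∀ X : Finset ℕ, X ∩ S = X.erase a ∩ S := by
      intro X
      ext c
      simp only [Finset.mem_inter, Finset.mem_erase]
      constructor
      · rintro ⟨h1, h2⟩; exact ⟨⟨fun hc => haS (hc ▸ h2), h1⟩, h2⟩
      · rintro ⟨⟨_, h1⟩, h2⟩; exact ⟨h1, h2⟩
    have hinj : Set.InjOn (fun X : Finset ℕ => X.erase a) F := by
      intro X hX Y hY hXY
      simp only at hXY
      by_cases haX : a ∈ X <;> by_cases haY : a ∈ Y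
      · ext c
        by_cases hc : c = a
        · subst hc; simp [haX, haY]
        · have := Finset.ext_iff.mp hXY c
          simpa [Finset.mem_erase, hc] using this
      · exfalso
        have hY' : Y = X.erase a := by rw [hXY]; exact (Finset.erase_eq_of_notMem haY).symm
        have h1 := hpos X hX haX
        have h2 := hneg Y hY haY
        rw [hY', ← hinterS X] at h2
        exact Finset.nonempty_iff_ne_empty.mp h1 h2
      · exfalso
        have hX' : X = Y.erase a := by rw [← hXY]; exact (Finset.erase_eq_of_notMem haX).symm
        have h1 := hpos Y hY haY
        have h2 := hneg X hX haX
        rw [hX', ← hinterS Y] at h2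
        exact Finset.nonempty_iff_ne_empty.mp h1 h2
      · rw [← Finset.erase_eq_of_notMem haX, ← Finset.erase_eq_of_notMem haY, hXY]
    set F' : Finset (Finset ℕ) := F.image (fun X => X.erase a) with hF'
    have hcard' : F'.card = F.card := Finset.card_image_of_injOn hinj
    -- universe of F' is contained in (famUniv F).erase a
    have hUsub : famUniv F' ⊆ (famUniv F).erase a := by
      intro c hc
      obtain ⟨Z, hZ, hcZ⟩ := Finset.mem_sup.mp hc
      obtain ⟨X, hX, rfl⟩ := Finset.mem_image.mp hZ
      simp only [id] at hcZ
      obtain ⟨hca, hcX⟩ := Finset.mem_erase.mp hcZ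
      exact Finset.mem_erase.mpr ⟨hca, Finset.mem_sup.mpr ⟨X, hX, hcX⟩⟩
    have hUcard : (famUniv F').card ≤ n := by
      have h1 : (famUniv F').card ≤ ((famUniv F).erase a).card := Finset.card_le_card hUsub
      have h2 : ((famUniv F).erase a).card = (famUniv F).card - 1 := Finset.card_erase_of_mem ha
      have h3 : 1 ≤ (famUniv F).card := Finset.card_pos.mpr ⟨a, ha⟩
      omega
    have huc' : unionClosed F' := by
      intro A hA B hB
      obtain ⟨X, hX, rfl⟩ := Finset.mem_image.mp hA
      obtain ⟨Y, hY, rfl⟩ := Finset.mem_image.mp hB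
      rw [← Finset.erase_union_distrib]
      exact Finset.mem_image_of_mem _ (huc X hX Y hY)
    have hne1 : F' ≠ ∅ := by
      apply Finset.nonempty_iff_ne_empty.mp
      exact (Finset.nonempty_iff_ne_empty.mpr hne).image _
    -- get b ∈ S
    obtain ⟨X0, hX0, haX0⟩ : ∃ X ∈ F, a ∈ X := by
      obtain ⟨X, hX, haX⟩ := Finset.mem_sup.mp ha
      exact ⟨X, hX, haX⟩
    obtain ⟨b, hb⟩ : S.Nonempty := by
      have := hpos X0 hX0 haX0
      obtain ⟨c, hc⟩ := this
      exact ⟨c, (Finset.mem_inter.mp hc).2⟩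
    have hbU : b ∈ famUniv F := (Finset.mem_sdiff.mp (hS hb)).1
    have hba : b ≠ a := by
      have := (Finset.mem_sdiff.mp (hS hb)).2
      simpa using this
    have hne2 : F' ≠ {∅} := by
      intro heq
      obtain ⟨Y, hY, hbY⟩ := Finset.mem_sup.mp hbU
      have hmem : Y.erase a ∈ F' := Finset.mem_image_of_mem _ hY
      rw [heq, Finset.mem_singleton] at hmem
      have : b ∈ Y.erase a := Finset.mem_erase.mpr ⟨hba, hbY⟩
      rw [hmem] at this
      exact absurd this (Finset.notMem_empty b)
    obtain ⟨a', ha', hcard2⟩ := IH F' hUcard huc' hne1 hne2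
    have ha'a : a' ≠ a := (Finset.mem_erase.mp (hUsub ha')).1
    refine ⟨a', Finset.mem_of_mem_erase (hUsub ha'), ?_⟩
    have hAt : famAt F' a' = (famAt F a').image (fun X => X.erase a) := by
      unfold famAt
      rw [hF', Finset.filter_image]
      congr 1
      apply Finset.filter_congr
      intro X _
      simp [Finset.mem_erase, ha'a]
    have hAtcard : (famAt F' a').card = (famAt F a').card := by
      rw [hAt]
      exact Finset.card_image_of_injOn (hinj.mono (by
        intro X hX
        exact Finset.mem_of_mem_filter X hX))
    calc F.card = F'.card := hcard'.symm
      _ ≤ 2 * (famAt F' a').card := hcard2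
      _ = 2 * (famAt F a').card := by rw [hAtcard]

theorem stmt3
    (h : ∀ F : Finset (Finset ℕ), unionClosed F → independent F → F ≠ ∅ → F ≠ {∅} →
      ∃ a ∈ famUniv F, F.card ≤ 2 * (famAt F a).card) :
    ∀ F : Finset (Finset ℕ), unionClosed F → F ≠ ∅ → F ≠ {∅} →
      ∃ a ∈ famUniv F, F.card ≤ 2 * (famAt F a).card := by
  intro F
  exact stmt3_aux h (famUniv F).card F le_rfl
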